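/- In the category of ω-complete partial orders (posets with suprema of ω-chains, not necessarily having a least element) and ω-continuous maps, with delay ◇X = X⊥ the lifting of X by a new least element ⊥, p_X : X → X⊥ the inclusion, and dagger defined for continuous f : X⊥ × Y → X by f† = f ∘ ⟨s, id_Y⟩ where s is the least fixed point of the continuous self-map Φ_f(m) = p_X ∘ f ∘ ⟨m, id_Y⟩ on the pointwise-ordered cpo of continuous maps Y → X⊥: this operator † satisfies the fixpoint identity, the parameter identity, the composition identity, the double dagger identity, and uniformity. -/

import Mathlib

open OmegaCompletePartialOrder

universe u

namespace GuardedCPO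

variable {X : Type u} [OmegaCompletePartialOrder X]

/-- The tail of a chain in `X⊥` which takes a non-`⊥` value `x₀` at index `n₀`:
it is a chain in `X`. -/
def tailChain (c : Chain (WithBot X)) (n₀ : ℕ) (x₀ : X)
    (h0 : c n₀ = (x₀ : WithBot X)) : Chain X where
  toFun k := (c (n₀ + k)).unbotD x₀
  monotone' := by
    intro i j hij
    have hbi : (x₀ : WithBot X) ≤ c (n₀ + i) := h0 ▸ c.monotone (Nat.le_add_right _ _)
    have hbj : (x₀ : WithBot X) ≤ c (n₀ + j) := h0 ▸ c.monotone (Nat.le_add_right _ _)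
    obtain ⟨xi, hxi, -⟩ := WithBot.coe_le_iff.mp hbi
    obtain ⟨xj, hxj, -⟩ := WithBot.coe_le_iff.mp hbj
    have hmono : (xi : WithBot X) ≤ (xj : WithBot X) := by
      rw [← hxi, ← hxj]; exact c.monotone (by omega)
    show (c (n₀ + i)).unbotD x₀ ≤ (c (n₀ + j)).unbotD x₀
    rw [hxi, hxj, WithBot.unbotD_coe, WithBot.unbotD_coe]
    exact WithBot.coe_le_coe.mp hmono

lemma coe_tailChain (c : Chain (WithBot X)) (n₀ : ℕ) (x₀ : X)
    (h0 : c n₀ = (x₀ : WithBot X)) (k : ℕ) :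
    ((tailChain c n₀ x₀ h0 k : X) : WithBot X) = c (n₀ + k) := by
  have hb : (x₀ : WithBot X) ≤ c (n₀ + k) := h0 ▸ c.monotone (Nat.le_add_right _ _)
  obtain ⟨xk, hxk, -⟩ := WithBot.coe_le_iff.mp hb
  show (((c (n₀ + k)).unbotD x₀ : X) : WithBot X) = c (n₀ + k)
  rw [hxk, WithBot.unbotD_coe]

open Classical in
/-- The supremum of an `ω`-chain in the lifted cpo `X⊥ = WithBot X`. -/
noncomputable def lsup (c : Chain (WithBot X)) : WithBot X :=
  if h : ∃ (n : ℕ) (x : X), c n = (x : WithBot X) then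
    ↑(ωSup (tailChain c h.choose h.choose_spec.choose h.choose_spec.choose_spec))
  else ⊥

/-- The lifting `X⊥` of an `ω`-complete partial order `X` by a new least element `⊥` is
again an `ω`-complete partial order. -/
noncomputable instance : OmegaCompletePartialOrder (WithBot X) :=
  { (inferInstance : PartialOrder (WithBot X)) with
    ωSup := lsup
    le_ωSup := by
      intro c i
      cases hc : c i with
      | bot => exact bot_le
      | coe x =>
        have h : ∃ (n : ℕ) (x : X), c n = (x : WithBot X) := ⟨i, x, hc⟩
        rw [lsup, dif_pos h]
        have h0 := h.choose_spec.choose_spec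
        have hcoe := coe_tailChain c h.choose h.choose_spec.choose h0 i
        calc (↑x : WithBot X) = c i := hc.symm
          _ ≤ c (h.choose + i) := c.monotone (by omega)
          _ = ↑(tailChain c h.choose h.choose_spec.choose h0 i) := hcoe.symm
          _ ≤ _ := WithBot.coe_le_coe.mpr (le_ωSup _ i)
    ωSup_le := by
      intro c x hx
      rw [lsup]
      split_ifs with h
      · have h0 := h.choose_spec.choose_spec
        have hb : (h.choose_spec.choose : WithBot X) ≤ x := h0 ▸ hx h.choose
        obtain ⟨b, hb', -⟩ := WithBot.coe_le_iff.mp hb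
        subst hb'
        refine WithBot.coe_le_coe.mpr (ωSup_le _ _ fun k => ?_)
        have := coe_tailChain c h.choose h.choose_spec.choose h0 k
        exact WithBot.coe_le_coe.mp (this ▸ hx (h.choose + k))
      · exact bot_le }

variable {Y : Type u} [OmegaCompletePartialOrder Y]

/-- The endomap `Φ_f(m) = p_X ∘ f ∘ ⟨m, id⟩` on maps `Y → X⊥` associated with
`f : X⊥ × Y → X`. -/
def phi (f : WithBot X × Y → X) (m : Y → WithBot X) : Y → WithBot X :=
  fun y => ↑(f (m y, y))

lemma phi_mono {f : WithBot X × Y → X} (hf : Monotone f) : Monotone (phi f) :=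
  fun _ _ hm y => WithBot.coe_le_coe.mpr (hf ⟨hm y, le_rfl⟩)

lemma seq_mono {f : WithBot X × Y → X} (hf : Monotone f) (y : Y) :
    Monotone fun n => (phi f)^[n] (fun _ => (⊥ : WithBot X)) y := by
  have key : ∀ n, (phi f)^[n] (fun _ => (⊥ : WithBot X)) ≤
      (phi f)^[n + 1] (fun _ => (⊥ : WithBot X)) := by
    intro n
    induction n with
    | zero => exact fun y => bot_le
    | succ n ih =>
      rw [Function.iterate_succ_apply', Function.iterate_succ_apply']
      exact phi_mono hf ih
  exact monotone_nat_of_le_succ fun n => key n y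

open Classical in
/-- The least fixed point of `Φ_f`, obtained as the supremum of the Kleene chain
`⊥ ≤ Φ_f(⊥) ≤ Φ_f²(⊥) ≤ …`. -/
noncomputable def kleeneFix (f : WithBot X × Y → X) : Y → WithBot X := fun y =>
  if hf : Monotone f then
    ωSup ⟨fun n => (phi f)^[n] (fun _ => (⊥ : WithBot X)) y, seq_mono hf y⟩
  else ⊥

/-- The guarded fixpoint operator on `CPO` with delay `◇X = X⊥`:
`f† = f ∘ ⟨s, id⟩` where `s` is the least fixed point of `Φ_f`. -/
noncomputable def dag (f : WithBot X × Y → X) : Y → X := fun y => f (kleeneFix f y, y)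

/-! ### Auxiliary lemmas -/

section Aux

variable {α β : Type u} [OmegaCompletePartialOrder α] [OmegaCompletePartialOrder β]

lemma ωSup_congr' {c d : Chain α} (h : ∀ n, c n = d n) : ωSup c = ωSup d :=
  le_antisymm (ωSup_le _ _ fun n => (h n) ▸ le_ωSup d n)
    (ωSup_le _ _ fun n => (h n).symm ▸ le_ωSup c n)

/-- The constant chain. -/
def constChain (a : α) : Chain α := ⟨fun _ => a, fun _ _ _ => le_rfl⟩

@[simp] lemma constChain_coe (a : α) (n : ℕ) : constChain a n = a := rfl

lemma ωSup_constChain (a : α) : ωSup (constChain a) = a :=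
  le_antisymm (ωSup_le _ _ fun _ => le_rfl) (le_ωSup (constChain a) 0)

/-- The inclusion `X → X⊥` is continuous. -/
lemma ωSup_coe' (d : Chain X) (c : Chain (WithBot X)) (h : ∀ n, c n = ↑(d n)) :
    ωSup c = ↑(ωSup d) := by
  apply le_antisymm
  · exact ωSup_le _ _ fun n => (h n).le.trans (WithBot.coe_le_coe.mpr (le_ωSup d n))
  · have h0 : (↑(d 0) : WithBot X) ≤ ωSup c := (h 0) ▸ le_ωSup c 0
    obtain ⟨b, hb, -⟩ := WithBot.coe_le_iff.mp h0
    rw [hb]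
    refine WithBot.coe_le_coe.mpr (ωSup_le _ _ fun n => ?_)
    refine WithBot.coe_le_coe.mp ?_
    rw [← h n, ← hb]
    exact le_ωSup c n

lemma ωSup_eq_bot (c : Chain (WithBot X)) (h : ∀ n, c n = ⊥) : ωSup c = ⊥ :=
  le_antisymm (ωSup_le _ _ fun n => (h n).le) bot_le

lemma ωSup_tail (c : Chain (WithBot X)) (n₀ : ℕ) (x₀ : X)
    (h0 : c n₀ = (x₀ : WithBot X)) :
    ωSup c = ↑(ωSup (tailChain c n₀ x₀ h0)) := by
  apply le_antisymm
  · refine ωSup_le _ _ fun n => ?_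
    calc c n ≤ c (n₀ + n) := c.monotone (by omega)
      _ = ↑(tailChain c n₀ x₀ h0 n) := (coe_tailChain c n₀ x₀ h0 n).symm
      _ ≤ _ := WithBot.coe_le_coe.mpr (le_ωSup _ n)
  · have hx : (x₀ : WithBot X) ≤ ωSup c := h0 ▸ le_ωSup c n₀
    obtain ⟨b, hb, -⟩ := WithBot.coe_le_iff.mp hx
    rw [hb]
    refine WithBot.coe_le_coe.mpr (ωSup_le _ _ fun k => ?_)
    refine WithBot.coe_le_coe.mp ?_
    rw [coe_tailChain c n₀ x₀ h0 k, ← hb]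
    exact le_ωSup c _

/-- `WithBot.map g` is continuous for continuous `g`. -/
lemma ωSup_map' {g : α → X} (hg : ωScottContinuous g)
    (c : Chain (WithBot α)) (c' : Chain (WithBot X))
    (h : ∀ n, c' n = WithBot.map g (c n)) :
    ωSup c' = WithBot.map g (ωSup c) := by
  by_cases hb : ∀ n, c n = ⊥
  · rw [ωSup_eq_bot c hb, ωSup_eq_bot c' fun n => by rw [h n, hb n, WithBot.map_bot]]
    simp [WithBot.map_bot]
  · push_neg at hb
    obtain ⟨n₀, hn₀⟩ := hb
    obtain ⟨x₀, hx₀⟩ := WithBot.ne_bot_iff_exists.mp hn₀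
    have h0 : c n₀ = (x₀ : WithBot α) := hx₀.symm
    have h0' : c' n₀ = ((g x₀ : X) : WithBot X) := by

      rw [h n₀, h0, WithBot.map_coe]
    rw [ωSup_tail c n₀ x₀ h0, ωSup_tail c' n₀ (g x₀) h0', WithBot.map_coe]
    congr 1
    have key : ∀ k, tailChain c' n₀ (g x₀) h0' k = g (tailChain c n₀ x₀ h0 k) := by
      intro k
      have := coe_tailChain c' n₀ (g x₀) h0' k
      rw [h (n₀ + k), ← coe_tailChain c n₀ x₀ h0 k, WithBot.map_coe] at this
      exact WithBot.coe_injective this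
    rw [hg.map_ωSup]
    exact ωSup_congr' key

end Aux

section KleeneAux

variable {Y' : Type u} [OmegaCompletePartialOrder Y']

lemma iter_succ (f : WithBot X × Y' → X) (n : ℕ) (y : Y') :
    (phi f)^[n + 1] (fun _ => (⊥ : WithBot X)) y
      = ↑(f ((phi f)^[n] (fun _ => (⊥ : WithBot X)) y, y)) := by
  rw [Function.iterate_succ_apply']; rfl

/-- The Kleene chain of `f` at `y`. -/
def kchain (f : WithBot X × Y' → X) (hf : Monotone f) (y : Y') : Chain (WithBot X) :=
  ⟨fun n => (phi f)^[n] (fun _ => (⊥ : WithBot X)) y, seq_mono hf y⟩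

lemma kleeneFix_eq (f : WithBot X × Y' → X) (hf : Monotone f) (y : Y') :
    kleeneFix f y = ωSup (kchain f hf y) := by
  rw [kleeneFix, dif_pos hf]; rfl

lemma iter_mono (f : WithBot X × Y' → X) (hf : Monotone f) (n : ℕ) :
    Monotone ((phi f)^[n] (fun _ => (⊥ : WithBot X))) := by
  induction n with
  | zero => exact fun _ _ _ => le_rfl
  | succ n ih =>
    intro y y' hy
    rw [iter_succ, iter_succ]
    exact WithBot.coe_le_coe.mpr (hf ⟨ih hy, hy⟩)

lemma kleeneFix_mono {f : WithBot X × Y' → X} (hf : Monotone f) :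
    Monotone (kleeneFix f) := by
  intro y y' hy
  rw [kleeneFix_eq f hf, kleeneFix_eq f hf]
  exact ωSup_le _ _ fun n =>
    le_trans (iter_mono f hf n hy) (le_ωSup (kchain f hf y') n)

lemma iter_le {f : WithBot X × Y' → X} (hf : Monotone f) {m : Y' → WithBot X}
    (hm : ∀ y, (↑(f (m y, y)) : WithBot X) ≤ m y) (n : ℕ) (y : Y') :
    (phi f)^[n] (fun _ => (⊥ : WithBot X)) y ≤ m y := by
  induction n with
  | zero => exact bot_le
  | succ n ih =>
    rw [iter_succ]
    refine le_trans ?_ (hm y)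
    exact WithBot.coe_le_coe.mpr (hf ⟨ih, le_rfl⟩)

lemma kleeneFix_le {f : WithBot X × Y' → X} (hf : Monotone f) {m : Y' → WithBot X}
    (hm : ∀ y, (↑(f (m y, y)) : WithBot X) ≤ m y) (y : Y') :
    kleeneFix f y ≤ m y := by
  rw [kleeneFix_eq f hf]
  exact ωSup_le _ _ fun n => iter_le hf hm n y

/-- A pointwise continuity property sufficient for the fixpoint lemma. -/
def ContAt (f : WithBot X × Y' → X) : Prop :=
  ∀ (c : Chain (WithBot X)) (d : Chain Y') (e : Chain (WithBot X)),
    (∀ n, e n = ↑(f (c n, d n))) → ωSup e = ↑(f (ωSup c, ωSup d))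

lemma contAt_of_cont {f : WithBot X × Y' → X} (hf : ωScottContinuous f) :
    ContAt f := by
  intro c d e he
  have hz : ωSup (c.zip d) = (ωSup c, ωSup d) := Prod.ωSup_zip c d
  have : f (ωSup c, ωSup d) = ωSup ((c.zip d).map ⟨f, hf.monotone⟩) := by
    rw [← hz]; exact hf.map_ωSup _
  rw [this]
  exact ωSup_coe' _ _ fun n => he n

lemma kleeneFix_fix {f : WithBot X × Y' → X} (hf : Monotone f) (hc : ContAt f)
    (y : Y') : kleeneFix f y = ↑(f (kleeneFix f y, y)) := by
  rw [kleeneFix_eq f hf]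
  have key : ωSup ⟨fun n => (phi f)^[n + 1] (fun _ => (⊥ : WithBot X)) y,
      fun i j hij => seq_mono hf y (by omega : i + 1 ≤ j + 1)⟩
      = ↑(f (ωSup (kchain f hf y), y)) := by
    have := hc (kchain f hf y) (constChain y)
      ⟨fun n => (phi f)^[n + 1] (fun _ => (⊥ : WithBot X)) y,
        fun i j hij => seq_mono hf y (by omega : i + 1 ≤ j + 1)⟩
      (fun n => iter_succ f n y)
    rwa [ωSup_constChain] at this
  rw [← key]
  apply le_antisymm
  · refine ωSup_le _ _ fun n => ?_
    refine le_trans (seq_mono hf y (Nat.le_succ n)) ?_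
    exact le_ωSup ⟨fun n => (phi f)^[n + 1] (fun _ => (⊥ : WithBot X)) y,
      fun i j hij => seq_mono hf y (by omega : i + 1 ≤ j + 1)⟩ n
  · exact ωSup_le _ _ fun n => le_ωSup (kchain f hf y) (n + 1)

end KleeneAux

/-- **The category `CPO` with the lifting delay `◇X = X⊥` and least fixed points is a
uniform guarded Conway category**: the operator `†` satisfies the fixpoint, parameter,
composition and double dagger identities, as well as uniformity.  (Morphisms are the
maps preserving suprema of `ω`-chains, i.e. `ω`-Scott-continuous maps; the point
`p_X : X → X⊥` is the inclusion `↑`.) -/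
theorem cpo_lift_guardedConway_uniform :
    -- (†) fixpoint identity
    (∀ (X Y : Type u) [OmegaCompletePartialOrder X] [OmegaCompletePartialOrder Y]
      (f : WithBot X × Y → X), ωScottContinuous f →
        dag f = fun y => f (↑(dag f y), y)) ∧
    -- (P) parameter identity
    (∀ (X Y Z : Type u) [OmegaCompletePartialOrder X] [OmegaCompletePartialOrder Y]
      [OmegaCompletePartialOrder Z] (f : WithBot X × Y → X) (h : Z → Y),
        ωScottContinuous f → ωScottContinuous h →
        dag (fun q : WithBot X × Z => f (q.1, h q.2)) = fun z => dag f (h z)) ∧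
    -- (C) composition identity
    (∀ (X Y Z : Type u) [OmegaCompletePartialOrder X] [OmegaCompletePartialOrder Y]
      [OmegaCompletePartialOrder Z] (f : WithBot X × Y → Z) (g : Z → X),
        ωScottContinuous f → ωScottContinuous g →
        dag (fun q => g (f q)) =
          fun y => g (dag (fun q : WithBot Z × Y => f (WithBot.map g q.1, q.2)) y)) ∧
    -- (††) double dagger identity
    (∀ (X Y : Type u) [OmegaCompletePartialOrder X] [OmegaCompletePartialOrder Y]
      (f : WithBot X × (WithBot X × Y) → X), ωScottContinuous f →
        dag (dag f) = dag (fun a : WithBot X × Y => f (a.1, (a.1, a.2)))) ∧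
    -- (U) uniformity
    (∀ (X X' Y : Type u) [OmegaCompletePartialOrder X] [OmegaCompletePartialOrder X']
      [OmegaCompletePartialOrder Y] (f : WithBot X × Y → X) (g : WithBot X' × Y → X')
      (h : X → X'), ωScottContinuous f → ωScottContinuous g → ωScottContinuous h →
        (∀ q : WithBot X × Y, h (f q) = g (WithBot.map h q.1, q.2)) →
        ∀ y, h (dag f y) = dag g y) := by
  refine ⟨?_, ?_, ?_, ?_, ?_⟩
  · -- (†) fixpoint identity
    intro X Y _ _ f hf
    funext y
    show f (kleeneFix f y, y) = f (↑(f (kleeneFix f y, y)), y)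
    exact congrArg (fun a => f (a, y)) (kleeneFix_fix hf.monotone (contAt_of_cont hf) y)
  · -- (P) parameter identity
    intro X Y Z _ _ _ f h hf hh
    funext z
    have hF : Monotone (fun q : WithBot X × Z => f (q.1, h q.2)) :=
      fun a b hab => hf.monotone ⟨hab.1, hh.monotone hab.2⟩
    have hiter : ∀ n z, (phi fun q : WithBot X × Z => f (q.1, h q.2))^[n]
        (fun _ => (⊥ : WithBot X)) z = (phi f)^[n] (fun _ => (⊥ : WithBot X)) (h z) := by
      intro n
      induction n with
      | zero => intro z; rfl
      | succ n ih =>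
        intro z
        rw [iter_succ, iter_succ, ih z]
    have hkf : kleeneFix (fun q : WithBot X × Z => f (q.1, h q.2)) z = kleeneFix f (h z) := by
      rw [kleeneFix_eq _ hF, kleeneFix_eq f hf.monotone]
      exact ωSup_congr' fun n => hiter n z
    show f (kleeneFix (fun q : WithBot X × Z => f (q.1, h q.2)) z, h z)
        = f (kleeneFix f (h z), h z)
    rw [hkf]
  · -- (C) composition identity
    intro X Y Z _ _ _ f g hf hg
    funext y
    have hGF : Monotone fun q : WithBot X × Y => g (f q) :=
      fun a b hab => hg.monotone (hf.monotone hab)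
    have hF' : Monotone fun q : WithBot Z × Y => f (WithBot.map g q.1, q.2) :=
      fun a b hab => hf.monotone ⟨hg.monotone.withBot_map hab.1, hab.2⟩
    have hiter : ∀ n y, (phi fun q : WithBot X × Y => g (f q))^[n]
          (fun _ => (⊥ : WithBot X)) y
        = WithBot.map g ((phi fun q : WithBot Z × Y => f (WithBot.map g q.1, q.2))^[n]
          (fun _ => (⊥ : WithBot Z)) y) := by
      intro n
      induction n with
      | zero => intro y; exact (WithBot.map_bot g).symm
      | succ n ih =>
        intro y
        rw [iter_succ, iter_succ, ih y, WithBot.map_coe]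
    have hkf : kleeneFix (fun q : WithBot X × Y => g (f q)) y
        = WithBot.map g (kleeneFix (fun q : WithBot Z × Y => f (WithBot.map g q.1, q.2)) y) := by
      rw [kleeneFix_eq _ hGF, kleeneFix_eq _ hF']
      exact ωSup_map' hg (kchain _ hF' y) (kchain _ hGF y) fun n => hiter n y
    show g (f (kleeneFix (fun q : WithBot X × Y => g (f q)) y, y)) = _
    rw [hkf]
    rfl
  · -- (††) double dagger identity
    intro X Y _ _ f hf
    have hfm : Monotone f := hf.monotone
    have hcf : ContAt f := contAt_of_cont hf
    have hDm : Monotone (fun a : WithBot X × Y => f (a.1, (a.1, a.2))) :=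
      fun a b hab => hfm ⟨hab.1, hab.1, hab.2⟩
    have hcD : ContAt (fun a : WithBot X × Y => f (a.1, (a.1, a.2))) := by
      intro c d e he
      have h2 := hcf c (c.zip d) e he
      rwa [Prod.ωSup_zip] at h2
    have hdagm : Monotone (dag f) :=
      fun a b hab => hfm ⟨kleeneFix_mono hfm hab, hab⟩
    have smono : Monotone (kleeneFix f) := kleeneFix_mono hfm
    have sfix : ∀ q, kleeneFix f q = ↑(f (kleeneFix f q, q)) := kleeneFix_fix hfm hcf
    have ufix : ∀ y, kleeneFix (fun a : WithBot X × Y => f (a.1, (a.1, a.2))) y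
        = ↑(f (kleeneFix (fun a : WithBot X × Y => f (a.1, (a.1, a.2))) y,
            (kleeneFix (fun a : WithBot X × Y => f (a.1, (a.1, a.2))) y, y))) :=
      kleeneFix_fix hDm hcD
    have skey : ∀ (m : Y → WithBot X),
        (∀ y, (↑(f (m y, (m y, y))) : WithBot X) ≤ m y) →
        ∀ y, kleeneFix f (m y, y) ≤ m y := by
      intro m hm y
      rw [kleeneFix_eq f hfm]
      refine ωSup_le _ _ fun n => ?_
      induction n with
      | zero => exact bot_le
      | succ n ih =>
        calc (kchain f hfm (m y, y)) (n + 1)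
            = ↑(f ((kchain f hfm (m y, y)) n, (m y, y))) := iter_succ f n (m y, y)
          _ ≤ ↑(f (m y, (m y, y))) := WithBot.coe_le_coe.mpr (hfm ⟨ih, le_rfl⟩)
          _ ≤ m y := hm y
    have step1 : ∀ n y, (phi (dag f))^[n] (fun _ => (⊥ : WithBot X)) y
        ≤ kleeneFix f ((phi (dag f))^[n] (fun _ => (⊥ : WithBot X)) y, y) := by
      intro n y
      cases n with
      | zero => exact bot_le
      | succ n =>
        have ha : (phi (dag f))^[n] (fun _ => (⊥ : WithBot X)) y
            ≤ (phi (dag f))^[n + 1] (fun _ => (⊥ : WithBot X)) y :=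
          seq_mono hdagm y (Nat.le_succ n)
        calc (phi (dag f))^[n + 1] (fun _ => (⊥ : WithBot X)) y
            = ↑(f (kleeneFix f ((phi (dag f))^[n] (fun _ => (⊥ : WithBot X)) y, y),
                ((phi (dag f))^[n] (fun _ => (⊥ : WithBot X)) y, y))) := iter_succ (dag f) n y
          _ ≤ ↑(f (kleeneFix f ((phi (dag f))^[n + 1] (fun _ => (⊥ : WithBot X)) y, y),
                ((phi (dag f))^[n + 1] (fun _ => (⊥ : WithBot X)) y, y))) :=
              WithBot.coe_le_coe.mpr (hfm ⟨smono ⟨ha, le_rfl⟩, ha, le_rfl⟩)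
          _ = kleeneFix f ((phi (dag f))^[n + 1] (fun _ => (⊥ : WithBot X)) y, y) :=
              (sfix _).symm
    have h1 : ∀ y, (↑(f (kleeneFix (dag f) y, (kleeneFix (dag f) y, y))) : WithBot X)
        ≤ kleeneFix (dag f) y := by
      intro y
      rw [kleeneFix_eq _ hdagm]
      have hcont := hcf (kchain (dag f) hdagm y)
        ((kchain (dag f) hdagm y).zip (constChain y))
        ⟨fun n => ↑(f ((kchain (dag f) hdagm y) n, ((kchain (dag f) hdagm y) n, y))),
          fun i j hij => WithBot.coe_le_coe.mpr
            (hfm ⟨seq_mono hdagm y hij, seq_mono hdagm y hij, le_rfl⟩)⟩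
        (fun n => rfl)
      rw [Prod.ωSup_zip, ωSup_constChain] at hcont
      rw [← hcont]
      refine ωSup_le _ _ fun n => ?_
      calc (↑(f ((kchain (dag f) hdagm y) n, ((kchain (dag f) hdagm y) n, y))) : WithBot X)
          ≤ ↑(f (kleeneFix f ((kchain (dag f) hdagm y) n, y),
              ((kchain (dag f) hdagm y) n, y))) :=
            WithBot.coe_le_coe.mpr (hfm ⟨step1 n y, le_rfl⟩)
        _ = (kchain (dag f) hdagm y) (n + 1) := (iter_succ (dag f) n y).symm
        _ ≤ ωSup (kchain (dag f) hdagm y) := le_ωSup _ (n + 1)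
    have htu : ∀ y, kleeneFix (dag f) y
        ≤ kleeneFix (fun a : WithBot X × Y => f (a.1, (a.1, a.2))) y := by
      intro y
      refine kleeneFix_le hdagm
        (m := kleeneFix (fun a : WithBot X × Y => f (a.1, (a.1, a.2)))) ?_ y
      intro y'
      show (↑(f (kleeneFix f (kleeneFix (fun a : WithBot X × Y => f (a.1, (a.1, a.2))) y', y'),
          (kleeneFix (fun a : WithBot X × Y => f (a.1, (a.1, a.2))) y', y'))) : WithBot X)
        ≤ kleeneFix (fun a : WithBot X × Y => f (a.1, (a.1, a.2))) y'
      calc (↑(f (kleeneFix f (kleeneFix (fun a : WithBot X × Y => f (a.1, (a.1, a.2))) y', y'),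
          (kleeneFix (fun a : WithBot X × Y => f (a.1, (a.1, a.2))) y', y'))) : WithBot X)
          ≤ ↑(f (kleeneFix (fun a : WithBot X × Y => f (a.1, (a.1, a.2))) y',
              (kleeneFix (fun a : WithBot X × Y => f (a.1, (a.1, a.2))) y', y'))) :=
            WithBot.coe_le_coe.mpr
              (hfm ⟨skey _ (fun y => (ufix y).ge) y', le_rfl⟩)
        _ ≤ kleeneFix (fun a : WithBot X × Y => f (a.1, (a.1, a.2))) y' := (ufix y').ge
    have hut : ∀ y, kleeneFix (fun a : WithBot X × Y => f (a.1, (a.1, a.2))) y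
        ≤ kleeneFix (dag f) y := by
      intro y
      exact kleeneFix_le hDm (m := kleeneFix (dag f)) (fun y' => h1 y') y
    funext y
    have heq : kleeneFix (dag f) y
        = kleeneFix (fun a : WithBot X × Y => f (a.1, (a.1, a.2))) y :=
      le_antisymm (htu y) (hut y)
    have hsT : kleeneFix f (kleeneFix (dag f) y, y) = kleeneFix (dag f) y := by
      refine le_antisymm (skey _ h1 y) ?_
      conv_lhs => rw [kleeneFix_eq _ hdagm]
      refine ωSup_le _ _ fun n => ?_
      exact le_trans (step1 n y)
        (smono ⟨by rw [kleeneFix_eq _ hdagm]; exact le_ωSup (kchain (dag f) hdagm y) n, le_rfl⟩)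
    show f (kleeneFix f (kleeneFix (dag f) y, y), (kleeneFix (dag f) y, y))
        = f (kleeneFix (fun a : WithBot X × Y => f (a.1, (a.1, a.2))) y,
            (kleeneFix (fun a : WithBot X × Y => f (a.1, (a.1, a.2))) y, y))
    rw [hsT, heq]
  · -- (U) uniformity
    intro X X' Y _ _ _ f g h hf hg hh hcomm y
    have hfm : Monotone f := hf.monotone
    have hgm : Monotone g := hg.monotone
    have hiter : ∀ n y, (phi g)^[n] (fun _ => (⊥ : WithBot X')) y
        = WithBot.map h ((phi f)^[n] (fun _ => (⊥ : WithBot X)) y) := by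
      intro n
      induction n with
      | zero => intro y; exact (WithBot.map_bot h).symm
      | succ n ih =>
        intro y
        calc (phi g)^[n + 1] (fun _ => (⊥ : WithBot X')) y
            = ↑(g ((phi g)^[n] (fun _ => (⊥ : WithBot X')) y, y)) := iter_succ g n y
          _ = ↑(g (WithBot.map h ((phi f)^[n] (fun _ => (⊥ : WithBot X)) y), y)) := by
              rw [ih y]
          _ = ↑(h (f ((phi f)^[n] (fun _ => (⊥ : WithBot X)) y, y))) := by
              rw [hcomm ((phi f)^[n] (fun _ => (⊥ : WithBot X)) y, y)]
          _ = WithBot.map h ↑(f ((phi f)^[n] (fun _ => (⊥ : WithBot X)) y, y)) :=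
              (WithBot.map_coe h _).symm
          _ = WithBot.map h ((phi f)^[n + 1] (fun _ => (⊥ : WithBot X)) y) := by
              rw [iter_succ f n y]
    have hkf : kleeneFix g y = WithBot.map h (kleeneFix f y) := by
      rw [kleeneFix_eq g hgm, kleeneFix_eq f hfm]
      exact ωSup_map' hh (kchain f hfm y) (kchain g hgm y) fun n => hiter n y
    show h (f (kleeneFix f y, y)) = g (kleeneFix g y, y)
    rw [hkf, hcomm (kleeneFix f y, y)]

end GuardedCPO
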